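/- Let G be a connected simple graph on n vertices, X a nonempty proper subset of V(G), and φ a real number with a(G) ≤ φ ≤ μ₁(G). Then the Laplacian spread satisfies S_L(G) ≥ |φ − ρ_G(X)|. -/

import Mathlib

open Finset Polynomial

/-- The number of edges of `G` with one endpoint in `X` and the other in `Xᶜ`
(each such edge corresponds to exactly one ordered pair in `X ×ˢ Xᶜ`). -/
def crossEdgeCard {n : ℕ} (G : SimpleGraph (Fin n)) [DecidableRel G.Adj]
    (X : Finset (Fin n)) : ℕ :=
  ((X ×ˢ Xᶜ).filter (fun p => G.Adj p.1 p.2)).card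

/-- The edge density `ρ_G(X) = n·|E_X(G)|/(|X|·|Xᶜ|)`. -/
noncomputable def edgeDensityR {n : ℕ} (G : SimpleGraph (Fin n)) [DecidableRel G.Adj]
    (X : Finset (Fin n)) : ℝ :=
  ((n : ℝ) * (crossEdgeCard G X : ℝ)) / ((X.card : ℝ) * ((Xᶜ : Finset (Fin n)).card : ℝ))

/-- `μ` is the (weakly decreasing) sequence of eigenvalues of the Laplacian matrix of `G`:
it is antitone and the characteristic polynomial of `L(G)` is `∏ i (x - μ i)`. -/
def IsLapEigSeq {n : ℕ} (G : SimpleGraph (Fin n)) [DecidableRel G.Adj]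
    (μ : Fin n → ℝ) : Prop :=
  (∀ i j : Fin n, i ≤ j → μ j ≤ μ i) ∧
    (G.lapMatrix ℝ).charpoly = ∏ i : Fin n, (X - C (μ i))

section Aux

open Matrix

lemma charpoly_conj_aux {n : ℕ} (U A V : Matrix (Fin n) (Fin n) ℝ)
    (hUV : U * V = 1) : (U * A * V).charpoly = A.charpoly := by
  have hmm : ∀ B C' : Matrix (Fin n) (Fin n) ℝ,
      (C : ℝ →+* ℝ[X]).mapMatrix (B * C')
        = (C : ℝ →+* ℝ[X]).mapMatrix B * (C : ℝ →+* ℝ[X]).mapMatrix C' :=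
    fun B C' => RingHom.map_mul _ B C'
  have hone : (C : ℝ →+* ℝ[X]).mapMatrix (U * V) = 1 := by rw [hUV]; exact RingHom.map_one _
  have hscal : ((C : ℝ →+* ℝ[X]).mapMatrix U) * Matrix.scalar (Fin n) (X : ℝ[X])
      = Matrix.scalar (Fin n) (X : ℝ[X]) * ((C : ℝ →+* ℝ[X]).mapMatrix U) :=
    (Matrix.scalar_commute (X : ℝ[X]) (fun r => Commute.all _ _) _).eq.symm
  have key : charmatrix (U * A * V) =
      (C : ℝ →+* ℝ[X]).mapMatrix U * charmatrix A * (C : ℝ →+* ℝ[X]).mapMatrix V := by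
    rw [charmatrix, charmatrix, mul_sub, sub_mul, hmm, hmm]
    congr 1
    rw [hscal, mul_assoc, ← hmm, hUV]
    rw [show (C : ℝ →+* ℝ[X]).mapMatrix (1 : Matrix (Fin n) (Fin n) ℝ) = 1 from RingHom.map_one _,
      mul_one]
  rw [Matrix.charpoly, key, det_mul, det_mul, Matrix.charpoly]
  have : ((C : ℝ →+* ℝ[X]).mapMatrix U).det * A.charmatrix.det
      * ((C : ℝ →+* ℝ[X]).mapMatrix V).det
      = A.charmatrix.det * (((C : ℝ →+* ℝ[X]).mapMatrix U) * ((C : ℝ →+* ℝ[X]).mapMatrix V)).det := by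
    rw [det_mul]; ring
  rw [this, ← hmm, hone, det_one, mul_one]

lemma charpoly_diag {n : ℕ} (d : Fin n → ℝ) :
    (Matrix.diagonal d).charpoly = ∏ i : Fin n, (X - C (d i)) := by
  have h : charmatrix (Matrix.diagonal d) = Matrix.diagonal fun i => (X : ℝ[X]) - C (d i) := by
    ext i j
    rcases eq_or_ne i j with rfl | h
    · simp
    · simp [h, Matrix.diagonal_apply_ne _ h]
  rw [Matrix.charpoly, h, det_diagonal]

lemma multiset_eq_of_prod_eq {n : ℕ} (μ ev : Fin n → ℝ)
    (h : ∏ i : Fin n, ((X : ℝ[X]) - C (μ i)) = ∏ i : Fin n, ((X : ℝ[X]) - C (ev i))) :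
    Multiset.map μ Finset.univ.val = Multiset.map ev Finset.univ.val := by
  have key : ∀ f : Fin n → ℝ, ∏ i : Fin n, ((X : ℝ[X]) - C (f i))
      = (Multiset.map (fun a => (X : ℝ[X]) - C a) (Multiset.map f Finset.univ.val)).prod := by
    intro f
    rw [Multiset.map_map]
    rfl
  rw [key μ, key ev] at h
  have := congrArg Polynomial.roots h
  rwa [roots_multiset_prod_X_sub_C, roots_multiset_prod_X_sub_C] at this

lemma rayleigh_bounds {n : ℕ} (G : SimpleGraph (Fin n)) [DecidableRel G.Adj] (hG : G.Connected)
    (lo hi : ℝ)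
    (hlo : ∀ i, (SimpleGraph.posSemidef_lapMatrix ℝ G).1.eigenvalues i ≠ 0 →
      lo ≤ (SimpleGraph.posSemidef_lapMatrix ℝ G).1.eigenvalues i)
    (hhi : ∀ i, (SimpleGraph.posSemidef_lapMatrix ℝ G).1.eigenvalues i ≤ hi)
    (x : Fin n → ℝ) (hx : ∑ j, x j = 0) :
    lo * (x ⬝ᵥ x) ≤ x ⬝ᵥ (G.lapMatrix ℝ *ᵥ x) ∧
      x ⬝ᵥ (G.lapMatrix ℝ *ᵥ x) ≤ hi * (x ⬝ᵥ x) := by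
  have hL : (G.lapMatrix ℝ).IsHermitian := (SimpleGraph.posSemidef_lapMatrix ℝ G).1
  set U : Matrix (Fin n) (Fin n) ℝ := (hL.eigenvectorUnitary : Matrix (Fin n) (Fin n) ℝ) with hU
  set ev : Fin n → ℝ := hL.eigenvalues with hev
  set y : Fin n → ℝ := x ᵥ* U with hy
  have hstar : star U = Uᵀ := by
    rw [Matrix.star_eq_conjTranspose, Matrix.conjTranspose_eq_transpose_of_trivial]
  have hyd : star U *ᵥ x = y := by rw [hstar, Matrix.mulVec_transpose]
  have hcoe : (RCLike.ofReal ∘ ev : Fin n → ℝ) = ev := by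
    funext i; simp
  have hquad : x ⬝ᵥ (G.lapMatrix ℝ *ᵥ x) = ∑ i, ev i * (y i * y i) := by
    conv_lhs => rw [hL.spectral_theorem, Unitary.conjStarAlgAut_apply, hcoe]
    rw [Matrix.dotProduct_mulVec, ← Matrix.vecMul_vecMul, ← Matrix.vecMul_vecMul,
      ← Matrix.dotProduct_mulVec, hyd, ← hU, ← hy]
    simp only [dotProduct, Matrix.vecMul_diagonal]
    exact Finset.sum_congr rfl fun i _ => by ring
  have hUU : U * star U = 1 := Matrix.mem_unitaryGroup_iff.mp hL.eigenvectorUnitary.2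
  have hnorm : x ⬝ᵥ x = ∑ i, y i * y i := by
    have h1 : ∑ i, y i * y i = y ⬝ᵥ y := rfl
    rw [h1, ← hyd, Matrix.dotProduct_mulVec, hstar, Matrix.vecMul_transpose,
      Matrix.mulVec_mulVec, ← hstar, hUU, Matrix.one_mulVec]
  have hker : ∀ i, ev i = 0 → y i = 0 := by
    intro i h0
    have hvec : G.lapMatrix ℝ *ᵥ ⇑(hL.eigenvectorBasis i) = 0 := by
      rw [hL.mulVec_eigenvectorBasis, ← hev, h0, zero_smul]
    have hreach := (G.lapMatrix_mulVec_eq_zero_iff_forall_reachable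
      (x := ⇑(hL.eigenvectorBasis i))).mp hvec
    have hne : Nonempty (Fin n) := hG.nonempty
    obtain ⟨v0⟩ := hne
    have hconst : ∀ j, (hL.eigenvectorBasis i) j = (hL.eigenvectorBasis i) v0 :=
      fun j => hreach j v0 (hG.preconnected j v0)
    have : y i = ∑ j, x j * (hL.eigenvectorBasis i) j := by
      rw [hy]
      simp only [Matrix.vecMul, dotProduct, hU]
      exact Finset.sum_congr rfl fun j _ => rfl
    rw [this]
    calc ∑ j, x j * (hL.eigenvectorBasis i) j
        = ∑ j, x j * (hL.eigenvectorBasis i) v0 :=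
          Finset.sum_congr rfl fun j _ => by rw [hconst j]
      _ = (∑ j, x j) * (hL.eigenvectorBasis i) v0 := by rw [Finset.sum_mul]
      _ = 0 := by rw [hx, zero_mul]
  constructor
  · rw [hquad, hnorm, Finset.mul_sum]
    refine Finset.sum_le_sum fun i _ => ?_
    rcases eq_or_ne (ev i) 0 with h0 | h0
    · rw [h0, hker i h0]; simp
    · exact mul_le_mul_of_nonneg_right (hlo i h0) (mul_self_nonneg _)
  · rw [hquad, hnorm, Finset.mul_sum]
    exact Finset.sum_le_sum fun i _ =>
      mul_le_mul_of_nonneg_right (hhi i) (mul_self_nonneg _)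

end Aux

open Matrix

/-- for a connected graph `G`, a nonempty proper subset `X` and
`a(G) ≤ φ ≤ μ₁`, the Laplacian spread satisfies `S_L(G) ≥ |φ - ρ_G(X)|`. -/
theorem laplacianSpread_ge_abs_sub_edgeDensity
    {n : ℕ} (hn : 2 ≤ n) (G : SimpleGraph (Fin n)) [DecidableRel G.Adj]
    (hG : G.Connected)
    (μ : Fin n → ℝ) (hμ : IsLapEigSeq G μ)
    (X : Finset (Fin n)) (hX : X.Nonempty) (hXp : X ≠ univ)
    (φ : ℝ) (hφ₁ : μ ⟨n - 2, by omega⟩ ≤ φ) (hφ₂ : φ ≤ μ ⟨0, by omega⟩) :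
    |φ - edgeDensityR G X| ≤ μ ⟨0, by omega⟩ - μ ⟨n - 2, by omega⟩ := by
  classical
  have pf0 : 0 < n := by omega
  have pfl : n - 1 < n := by omega
  have pf2 : n - 2 < n := by omega
  have hφ₁' : μ ⟨n - 2, pf2⟩ ≤ φ := hφ₁
  have hφ₂' : φ ≤ μ ⟨0, pf0⟩ := hφ₂
  set a : ℕ := X.card with ha
  set b : ℕ := (Xᶜ : Finset (Fin n)).card with hb
  have hapos : 0 < a := hX.card_pos
  have haltn : X.card < n := by
    have := Finset.card_lt_card (Finset.ssubset_univ_iff.mpr hXp)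
    simpa using this
  have hbpos : 0 < b := by
    rw [hb, Finset.card_compl, Fintype.card_fin]
    omega
  have hab : a + b = n := by
    rw [ha, hb, Finset.card_add_card_compl, Fintype.card_fin]
  have habR : (a : ℝ) + (b : ℝ) = (n : ℝ) := by exact_mod_cast congrArg (Nat.cast (R := ℝ)) hab
  set E : ℕ := crossEdgeCard G X with hE
  set x : Fin n → ℝ := fun v => if v ∈ X then (b : ℝ) else -(a : ℝ) with hxdef
  have hxX : ∀ v ∈ X, x v = (b : ℝ) := fun v hv => by simp [hxdef, hv]
  have hxXc : ∀ v ∈ (Xᶜ : Finset (Fin n)), x v = -(a : ℝ) := fun v hv => by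
    simp [hxdef, Finset.mem_compl.mp hv]
  have hx : ∑ j, x j = 0 := by
    rw [← Finset.sum_add_sum_compl X x]
    rw [Finset.sum_congr rfl hxX, Finset.sum_congr rfl hxXc]
    rw [Finset.sum_const, Finset.sum_const, ← ha, ← hb]
    simp only [nsmul_eq_mul]
    ring
  -- quadratic form value
  have hquad : x ⬝ᵥ (G.lapMatrix ℝ *ᵥ x) = (n : ℝ) ^ 2 * (E : ℝ) := by
    rw [← Matrix.toLinearMap₂'_apply', SimpleGraph.lapMatrix_toLinearMap₂']
    have hF : ∀ i ∈ X, ∀ j ∈ X, (if G.Adj i j then (x i - x j) ^ 2 else 0) = 0 := by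
      intro i hi j hj
      rw [hxX i hi, hxX j hj]
      simp
    have hFc : ∀ i ∈ (Xᶜ : Finset (Fin n)), ∀ j ∈ (Xᶜ : Finset (Fin n)),
        (if G.Adj i j then (x i - x j) ^ 2 else 0) = 0 := by
      intro i hi j hj
      rw [hxXc i hi, hxXc j hj]
      simp
    have hcross : ∑ i ∈ X, ∑ j ∈ (Xᶜ : Finset (Fin n)),
        (if G.Adj i j then (x i - x j) ^ 2 else 0) = (n : ℝ) ^ 2 * (E : ℝ) := by
      have : ∀ i ∈ X, ∀ j ∈ (Xᶜ : Finset (Fin n)),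
          (if G.Adj i j then (x i - x j) ^ 2 else 0)
            = (if G.Adj i j then (n : ℝ) ^ 2 else 0) := by
        intro i hi j hj
        rcases em (G.Adj i j) with h | h
        · rw [if_pos h, if_pos h, hxX i hi, hxXc j hj]
          rw [show (b : ℝ) - -(a : ℝ) = (a : ℝ) + (b : ℝ) by ring, habR]
        · rw [if_neg h, if_neg h]
      rw [Finset.sum_congr rfl fun i hi => Finset.sum_congr rfl fun j hj => this i hi j hj]
      rw [← Finset.sum_product']
      rw [← Finset.sum_filter]
      rw [Finset.sum_const, hE, crossEdgeCard]
      simp [mul_comm]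
    have hcross' : ∑ i ∈ (Xᶜ : Finset (Fin n)), ∑ j ∈ X,
        (if G.Adj i j then (x i - x j) ^ 2 else 0) = (n : ℝ) ^ 2 * (E : ℝ) := by
      rw [Finset.sum_comm]
      rw [← hcross]
      exact Finset.sum_congr rfl fun i _ => Finset.sum_congr rfl fun j _ =>
        if_congr (G.adj_comm j i) (by ring) rfl
    have hsplit : ∑ i : Fin n, ∑ j : Fin n, (if G.Adj i j then (x i - x j) ^ 2 else 0)
        = 2 * ((n : ℝ) ^ 2 * (E : ℝ)) := by
      rw [← Finset.sum_add_sum_compl X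
        (fun i => ∑ j : Fin n, (if G.Adj i j then (x i - x j) ^ 2 else 0))]
      have e1 : ∀ i : Fin n, ∑ j : Fin n, (if G.Adj i j then (x i - x j) ^ 2 else 0)
          = ∑ j ∈ X, (if G.Adj i j then (x i - x j) ^ 2 else 0)
            + ∑ j ∈ (Xᶜ : Finset (Fin n)), (if G.Adj i j then (x i - x j) ^ 2 else 0) :=
        fun i => (Finset.sum_add_sum_compl X _).symm
      rw [Finset.sum_congr rfl fun i (_ : i ∈ X) => e1 i,
        Finset.sum_congr rfl fun i (_ : i ∈ (Xᶜ : Finset (Fin n))) => e1 i]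
      rw [Finset.sum_add_distrib, Finset.sum_add_distrib]
      rw [Finset.sum_congr rfl fun i hi => Finset.sum_eq_zero fun j hj => hF i hi j hj]
      rw [Finset.sum_congr rfl fun i hi => Finset.sum_eq_zero fun j hj => hFc i hi j hj]
      rw [hcross, hcross']
      simp
      ring
    rw [hsplit]
    ring
  have hnormsq : x ⬝ᵥ x = (a : ℝ) * (b : ℝ) * (n : ℝ) := by
    have : x ⬝ᵥ x = ∑ j, x j * x j := rfl
    rw [this, ← Finset.sum_add_sum_compl X (fun j => x j * x j)]
    have s1 : ∑ j ∈ X, x j * x j = ∑ _j ∈ X, (b : ℝ) * (b : ℝ) :=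
      Finset.sum_congr rfl fun v hv => by rw [hxX v hv]
    have s2 : ∑ j ∈ (Xᶜ : Finset (Fin n)), x j * x j
        = ∑ _j ∈ (Xᶜ : Finset (Fin n)), -(a : ℝ) * -(a : ℝ) :=
      Finset.sum_congr rfl fun v hv => by rw [hxXc v hv]
    rw [s1, s2, Finset.sum_const, Finset.sum_const, ← ha, ← hb]
    simp only [nsmul_eq_mul]
    rw [← habR]
    ring
  -- eigenvalue facts
  have hL : (G.lapMatrix ℝ).IsHermitian := (SimpleGraph.posSemidef_lapMatrix ℝ G).1
  set ev : Fin n → ℝ := hL.eigenvalues with hev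
  have hcoe : (RCLike.ofReal ∘ ev : Fin n → ℝ) = ev := by funext i; simp
  have hUU : (hL.eigenvectorUnitary : Matrix (Fin n) (Fin n) ℝ)
      * star (hL.eigenvectorUnitary : Matrix (Fin n) (Fin n) ℝ) = 1 :=
    Matrix.mem_unitaryGroup_iff.mp hL.eigenvectorUnitary.2
  have hcp : (G.lapMatrix ℝ).charpoly = ∏ i : Fin n, (Polynomial.X - C (ev i)) := by
    conv_lhs => rw [hL.spectral_theorem, Unitary.conjStarAlgAut_apply, hcoe]
    rw [charpoly_conj_aux _ _ _ hUU, charpoly_diag]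
  have hprod : ∏ i : Fin n, (Polynomial.X - C (μ i)) = ∏ i : Fin n, (Polynomial.X - C (ev i)) := by
    rw [← hμ.2, hcp]
  have hmul := multiset_eq_of_prod_eq μ ev hprod
  have hex : ∀ i, ∃ j, ev i = μ j := by
    intro i
    have : ev i ∈ Multiset.map μ Finset.univ.val := by
      rw [hmul]
      exact Multiset.mem_map_of_mem ev (Finset.mem_univ i)
    obtain ⟨j, _, hj⟩ := Multiset.mem_map.mp this
    exact ⟨j, hj.symm⟩
  have hex' : ∀ j, ∃ i, μ j = ev i := by
    intro j
    have : μ j ∈ Multiset.map ev Finset.univ.val := by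
      rw [← hmul]
      exact Multiset.mem_map_of_mem μ (Finset.mem_univ j)
    obtain ⟨i, _, hi⟩ := Multiset.mem_map.mp this
    exact ⟨i, hi.symm⟩
  have hnn : ∀ j, 0 ≤ μ j := by
    intro j
    obtain ⟨i, hi⟩ := hex' j
    rw [hi]
    exact (SimpleGraph.posSemidef_lapMatrix ℝ G).eigenvalues_nonneg i
  have hlast : μ ⟨n - 1, pfl⟩ = 0 := by
    have hdet : (G.lapMatrix ℝ).det = 0 := by
      rw [← Matrix.exists_mulVec_eq_zero_iff]
      refine ⟨fun _ => 1, ?_, SimpleGraph.lapMatrix_mulVec_const_eq_zero (R := ℝ) G⟩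
      intro h
      have := congrFun h ⟨0, pf0⟩
      norm_num at this
    have hdet2 : ∏ i : Fin n, ev i = 0 := by
      have := hL.det_eq_prod_eigenvalues
      rw [hdet] at this
      exact_mod_cast this.symm
    obtain ⟨i, _, hi0⟩ := Finset.prod_eq_zero_iff.mp hdet2
    obtain ⟨j, hj⟩ := hex i
    have hμj : μ j = 0 := by rw [← hj, hi0]
    have h1 : μ ⟨n - 1, pfl⟩ ≤ μ j := hμ.1 j ⟨n - 1, pfl⟩ (by
      rw [Fin.le_def]
      simp only []
      omega)
    have h2 : 0 ≤ μ ⟨n - 1, pfl⟩ := hnn _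
    rw [hμj] at h1
    linarith
  have hlo : ∀ i, ev i ≠ 0 → μ ⟨n - 2, pf2⟩ ≤ ev i := by
    intro i hne
    obtain ⟨j, hj⟩ := hex i
    have hjne : (j : ℕ) ≠ n - 1 := by
      intro hcontra
      apply hne
      rw [hj, show j = (⟨n - 1, pfl⟩ : Fin n) from Fin.ext hcontra, hlast]
    have hjle : j ≤ (⟨n - 2, pf2⟩ : Fin n) := by
      rw [Fin.le_def]
      have := j.2
      simp only []
      omega
    rw [hj]
    exact hμ.1 j ⟨n - 2, pf2⟩ hjle
  have hhi : ∀ i, ev i ≤ μ ⟨0, pf0⟩ := by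
    intro i
    obtain ⟨j, hj⟩ := hex i
    rw [hj]
    exact hμ.1 ⟨0, pf0⟩ j (by rw [Fin.le_def]; simp)
  obtain ⟨hray1, hray2⟩ := rayleigh_bounds G hG (μ ⟨n - 2, pf2⟩) (μ ⟨0, pf0⟩)
    hlo hhi x hx
  rw [hquad, hnormsq] at hray1 hray2
  -- edge density equals Rayleigh quotient
  have haR : (0 : ℝ) < (a : ℝ) := by exact_mod_cast hapos
  have hbR : (0 : ℝ) < (b : ℝ) := by exact_mod_cast hbpos
  have hnR : (0 : ℝ) < (n : ℝ) := by
    have : 0 < n := by omega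
    exact_mod_cast this
  have hden : (0 : ℝ) < (a : ℝ) * (b : ℝ) * (n : ℝ) := by positivity
  have hρ : edgeDensityR G X = ((n : ℝ) ^ 2 * (E : ℝ)) / ((a : ℝ) * (b : ℝ) * (n : ℝ)) := by
    rw [edgeDensityR, ← ha, ← hb, ← hE]
    rw [div_eq_div_iff (by positivity : ((a : ℝ) * (b : ℝ)) ≠ 0) hden.ne']
    ring
  have hρlo : μ ⟨n - 2, pf2⟩ ≤ edgeDensityR G X := by
    rw [hρ, le_div_iff₀ hden]
    linarith [hray1]
  have hρhi : edgeDensityR G X ≤ μ ⟨0, pf0⟩ := by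
    rw [hρ, div_le_iff₀ hden]
    linarith [hray2]
  show |φ - edgeDensityR G X| ≤ μ ⟨0, pf0⟩ - μ ⟨n - 2, pf2⟩
  exact abs_le.mpr ⟨by linarith, by linarith⟩
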